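/- Let $(T(t))_{t\ge 0}$ be a $C_0$-semigroup on a Banach space $X$ and suppose there exist $p\in[1,\infty)$ and $C>0$ such that $\int_0^\infty\|T(t)x\|^p\,dt\le C\|x\|^p$ for all $x\in X$. Then $(T(t))_{t\ge 0}$ is exponentially stable; moreover its exponential growth bound satisfies $\omega(T)\le -(pC)^{-1}$. -/

import Mathlib

open Filter Topology MeasureTheory ENNReal

/-- A `C₀`-semigroup on a Banach space. -/
def IsC0Semigroup {X : Type*} [NormedAddCommGroup X] [NormedSpace ℂ X]
    (T : ℝ → X →L[ℂ] X) : Prop :=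
  T 0 = 1 ∧ (∀ s t : ℝ, 0 ≤ s → 0 ≤ t → T (s + t) = T s ∘L T t) ∧
    ∀ x : X, ContinuousOn (fun t => T t x) (Set.Ici 0)

section Aux

variable {X : Type*} [NormedAddCommGroup X] [NormedSpace ℂ X]

/-- The tail integral `∫_r^∞ ‖T(t)x‖^p dt` in `ℝ≥0∞`. -/
noncomputable def dpG (T : ℝ → X →L[ℂ] X) (p : ℝ) (x : X) (r : ℝ) : ℝ≥0∞ :=
  ∫⁻ t in Set.Ioi r, ENNReal.ofReal (‖T t x‖ ^ p)

lemma dpG_mono (T : ℝ → X →L[ℂ] X) (p : ℝ) (x : X) {a b : ℝ} (hab : a ≤ b) :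
    dpG T p x b ≤ dpG T p x a :=
  lintegral_mono_set (Set.Ioi_subset_Ioi hab)

/-- Shift estimate: `∫_r^∞ ‖T(t)x‖^p dt ≤ C ‖T(r)x‖^p`. -/
lemma dpG_shift (T : ℝ → X →L[ℂ] X) (hT : IsC0Semigroup T)
    (p : ℝ) (C : ℝ)
    (h : ∀ x : X, ∫⁻ t in Set.Ioi (0 : ℝ), ENNReal.ofReal (‖T t x‖ ^ p) ≤
      ENNReal.ofReal (C * ‖x‖ ^ p))
    (x : X) {r : ℝ} (hr : 0 ≤ r) :
    dpG T p x r ≤ ENNReal.ofReal (C * ‖T r x‖ ^ p) := by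
  obtain ⟨hT0, hTmul, hTcont⟩ := hT
  have hmp : MeasurePreserving (fun t : ℝ => t + r) volume volume :=
    measurePreserving_add_right volume r
  have hemb : MeasurableEmbedding (fun t : ℝ => t + r) :=
    (MeasurableEquiv.addRight r).measurableEmbedding
  have hpre : (fun t : ℝ => t + r) ⁻¹' Set.Ioi r = Set.Ioi 0 := by
    ext t; simp
  have hmap := hmp.setLIntegral_comp_preimage_emb hemb
    (fun t => ENNReal.ofReal (‖T t x‖ ^ p)) (Set.Ioi r)
  rw [hpre] at hmap
  have : dpG T p x r = ∫⁻ t in Set.Ioi (0:ℝ), ENNReal.ofReal (‖T t (T r x)‖ ^ p) := by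
    rw [dpG, ← hmap]
    refine setLIntegral_congr_fun measurableSet_Ioi (fun t ht => ?_)
    rw [hTmul t r (le_of_lt ht) hr]
    rfl
  rw [this]
  exact h (T r x)

/-- One contraction step: `(b-a+C) ⬝ G(b) ≤ C ⬝ G(a)`. -/
lemma dpG_step (T : ℝ → X →L[ℂ] X) (hT : IsC0Semigroup T)
    (p : ℝ) (C : ℝ) (hC : 0 < C)
    (h : ∀ x : X, ∫⁻ t in Set.Ioi (0 : ℝ), ENNReal.ofReal (‖T t x‖ ^ p) ≤
      ENNReal.ofReal (C * ‖x‖ ^ p))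
    (x : X) {a b : ℝ} (ha : 0 ≤ a) (hab : a ≤ b) :
    dpG T p x b * ENNReal.ofReal (b - a + C) ≤ ENNReal.ofReal C * dpG T p x a := by
  have hdisj : Disjoint (Set.Ioc a b) (Set.Ioi b) := by
    rw [Set.disjoint_left]
    rintro s ⟨_, h1⟩ h2
    exact absurd h1 (not_le.mpr h2)
  have hsplit : dpG T p x a
      = (∫⁻ t in Set.Ioc a b, ENNReal.ofReal (‖T t x‖ ^ p)) + dpG T p x b := by
    rw [dpG, dpG, ← lintegral_union measurableSet_Ioi hdisj, Set.Ioc_union_Ioi_eq_Ioi hab]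
  have key : ∀ s ∈ Set.Ioc a b,
      dpG T p x b ≤ ENNReal.ofReal C * ENNReal.ofReal (‖T s x‖ ^ p) := by
    intro s hs
    calc dpG T p x b ≤ dpG T p x s := dpG_mono T p x hs.2
      _ ≤ ENNReal.ofReal (C * ‖T s x‖ ^ p) := dpG_shift T hT p C h x (ha.trans hs.1.le)
      _ = ENNReal.ofReal C * ENNReal.ofReal (‖T s x‖ ^ p) := ENNReal.ofReal_mul hC.le
  have h1 : dpG T p x b * ENNReal.ofReal (b - a)
      ≤ ENNReal.ofReal C * ∫⁻ t in Set.Ioc a b, ENNReal.ofReal (‖T t x‖ ^ p) := by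
    calc dpG T p x b * ENNReal.ofReal (b - a)
        = dpG T p x b * volume (Set.Ioc a b) := by rw [Real.volume_Ioc]
      _ = ∫⁻ _ in Set.Ioc a b, dpG T p x b := (setLIntegral_const _ _).symm
      _ ≤ ∫⁻ s in Set.Ioc a b, ENNReal.ofReal C * ENNReal.ofReal (‖T s x‖ ^ p) :=
          setLIntegral_mono' measurableSet_Ioc key
      _ = _ := lintegral_const_mul' _ _ ENNReal.ofReal_ne_top
  calc dpG T p x b * ENNReal.ofReal (b - a + C)
      = dpG T p x b * ENNReal.ofReal (b - a) + ENNReal.ofReal C * dpG T p x b := by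
        rw [ENNReal.ofReal_add (by linarith) hC.le]; ring
    _ ≤ ENNReal.ofReal C * (∫⁻ t in Set.Ioc a b, ENNReal.ofReal (‖T t x‖ ^ p))
          + ENNReal.ofReal C * dpG T p x b := add_le_add h1 le_rfl
    _ = ENNReal.ofReal C * dpG T p x a := by rw [hsplit, mul_add]

lemma dpG_contract (T : ℝ → X →L[ℂ] X) (hT : IsC0Semigroup T)
    (p : ℝ) (C : ℝ) (hC : 0 < C)
    (h : ∀ x : X, ∫⁻ t in Set.Ioi (0 : ℝ), ENNReal.ofReal (‖T t x‖ ^ p) ≤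
      ENNReal.ofReal (C * ‖x‖ ^ p))
    (x : X) {a b : ℝ} (ha : 0 ≤ a) (hab : a ≤ b) :
    dpG T p x b ≤ ENNReal.ofReal (C / (b - a + C)) * dpG T p x a := by
  have hd : (0:ℝ) < b - a + C := by linarith
  have hne : ENNReal.ofReal (b - a + C) ≠ 0 := by
    simp [ENNReal.ofReal_eq_zero, not_le, hd]
  rw [← ENNReal.mul_le_mul_iff_left hne ENNReal.ofReal_ne_top]
  calc dpG T p x b * ENNReal.ofReal (b - a + C)
      ≤ ENNReal.ofReal C * dpG T p x a := dpG_step T hT p C hC h x ha hab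
    _ = ENNReal.ofReal (C / (b - a + C)) * dpG T p x a * ENNReal.ofReal (b - a + C) := by
        rw [mul_comm _ (ENNReal.ofReal (b - a + C)), ← mul_assoc,
          mul_comm (ENNReal.ofReal (b - a + C)), ← ENNReal.ofReal_mul (by positivity),
          div_mul_cancel₀ _ hd.ne']

lemma dpG_iter (T : ℝ → X →L[ℂ] X) (hT : IsC0Semigroup T)
    (p : ℝ) (C : ℝ) (hC : 0 < C)
    (h : ∀ x : X, ∫⁻ t in Set.Ioi (0 : ℝ), ENNReal.ofReal (‖T t x‖ ^ p) ≤
      ENNReal.ofReal (C * ‖x‖ ^ p))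
    (x : X) {e : ℝ} (he : 0 < e) (n : ℕ) :
    dpG T p x (n * e) ≤ ENNReal.ofReal (C / (e + C)) ^ n * dpG T p x 0 := by
  induction n with
  | zero => simp
  | succ n ih =>
    have h1 : dpG T p x ((n + 1 : ℕ) * e)
        ≤ ENNReal.ofReal (C / (e + C)) * dpG T p x (n * e) := by
      have harith : ((n + 1 : ℕ) : ℝ) * e - (n : ℝ) * e + C = e + C := by push_cast; ring
      have := dpG_contract T hT p C hC h x (a := (n : ℝ) * e) (b := ((n + 1 : ℕ) : ℝ) * e)
        (by positivity) (by push_cast; nlinarith)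
      rwa [harith] at this
    calc dpG T p x ((n + 1 : ℕ) * e) ≤ ENNReal.ofReal (C / (e + C)) * dpG T p x (n * e) := h1
      _ ≤ ENNReal.ofReal (C / (e + C)) * (ENNReal.ofReal (C / (e + C)) ^ n * dpG T p x 0) :=
          mul_le_mul' le_rfl ih
      _ = ENNReal.ofReal (C / (e + C)) ^ (n + 1) * dpG T p x 0 := by ring

/-- Pointwise estimate from the tail integral: for `t ≥ 1`,
`‖T(t)x‖^p ≤ M₁^p ⬝ G(t-1)`. -/
lemma dp_pointwise (T : ℝ → X →L[ℂ] X) (hT : IsC0Semigroup T)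
    (p : ℝ) (hp : 1 ≤ p) {M₁ : ℝ} (hM₁ : ∀ s ∈ Set.Icc (0:ℝ) 1, ‖T s‖ ≤ M₁) (hM₁0 : 0 ≤ M₁)
    (x : X) {t : ℝ} (ht : 1 ≤ t) :
    ENNReal.ofReal (‖T t x‖ ^ p) ≤ ENNReal.ofReal (M₁ ^ p) * dpG T p x (t - 1) := by
  obtain ⟨hT0, hTmul, hTcont⟩ := hT
  have hp0 : (0:ℝ) < p := lt_of_lt_of_le one_pos hp
  have key : ∀ s ∈ Set.Ioc (t - 1) t,
      ENNReal.ofReal (‖T t x‖ ^ p)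
        ≤ ENNReal.ofReal (M₁ ^ p) * ENNReal.ofReal (‖T s x‖ ^ p) := by
    intro s hs
    have hs0 : (0:ℝ) ≤ s := le_of_lt (lt_of_le_of_lt (by linarith) hs.1)
    have hts0 : (0:ℝ) ≤ t - s := by linarith [hs.2]
    have hts1 : t - s ≤ 1 := by linarith [hs.1]
    have hTt : T t x = T (t - s) (T s x) := by
      have := hTmul (t - s) s hts0 hs0
      rw [sub_add_cancel] at this
      rw [this]; rfl
    have hb : ‖T t x‖ ≤ M₁ * ‖T s x‖ := by
      rw [hTt]
      calc ‖T (t - s) (T s x)‖ ≤ ‖T (t - s)‖ * ‖T s x‖ :=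
            ContinuousLinearMap.le_opNorm _ _
        _ ≤ M₁ * ‖T s x‖ :=
            mul_le_mul_of_nonneg_right (hM₁ _ ⟨hts0, hts1⟩) (norm_nonneg _)
    have hbp : ‖T t x‖ ^ p ≤ M₁ ^ p * ‖T s x‖ ^ p := by
      calc ‖T t x‖ ^ p ≤ (M₁ * ‖T s x‖) ^ p :=
            Real.rpow_le_rpow (norm_nonneg _) hb hp0.le
        _ = M₁ ^ p * ‖T s x‖ ^ p := Real.mul_rpow hM₁0 (norm_nonneg _)
    calc ENNReal.ofReal (‖T t x‖ ^ p) ≤ ENNReal.ofReal (M₁ ^ p * ‖T s x‖ ^ p) :=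
          ENNReal.ofReal_le_ofReal hbp
      _ = _ := ENNReal.ofReal_mul (by positivity)
  calc ENNReal.ofReal (‖T t x‖ ^ p)
      = ENNReal.ofReal (‖T t x‖ ^ p) * volume (Set.Ioc (t - 1) t) := by
        rw [Real.volume_Ioc]
        norm_num
    _ = ∫⁻ _ in Set.Ioc (t - 1) t, ENNReal.ofReal (‖T t x‖ ^ p) :=
        (setLIntegral_const _ _).symm
    _ ≤ ∫⁻ s in Set.Ioc (t - 1) t, ENNReal.ofReal (M₁ ^ p) * ENNReal.ofReal (‖T s x‖ ^ p) :=
        setLIntegral_mono' measurableSet_Ioc key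
    _ = ENNReal.ofReal (M₁ ^ p) * ∫⁻ s in Set.Ioc (t - 1) t, ENNReal.ofReal (‖T s x‖ ^ p) :=
        lintegral_const_mul' _ _ ENNReal.ofReal_ne_top
    _ ≤ ENNReal.ofReal (M₁ ^ p) * dpG T p x (t - 1) :=
        mul_le_mul' le_rfl (lintegral_mono_set (fun s hs => hs.1))

end Aux

/-- Datko–Pazy with Weiss's quantitative bound: if
`∫₀^∞ ‖T(t)x‖^p dt ≤ C‖x‖^p` for all `x`, then the growth bound of the
semigroup satisfies `ω(T) ≤ -(pC)⁻¹`; in particular the semigroup is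
exponentially stable. -/
theorem datko_pazy_quantitative
    {X : Type*} [NormedAddCommGroup X] [NormedSpace ℂ X] [CompleteSpace X]
    (T : ℝ → X →L[ℂ] X) (hT : IsC0Semigroup T)
    (p : ℝ) (hp : 1 ≤ p) (C : ℝ) (hC : 0 < C)
    (h : ∀ x : X, ∫⁻ t in Set.Ioi (0 : ℝ), ENNReal.ofReal (‖T t x‖ ^ p) ≤
      ENNReal.ofReal (C * ‖x‖ ^ p)) :
    ∀ ω : ℝ, -(p * C)⁻¹ < ω →
      ∃ M : ℝ, ∀ t : ℝ, 0 ≤ t → ‖T t‖ ≤ M * Real.exp (ω * t) := by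
  have hp0 : (0:ℝ) < p := lt_of_lt_of_le one_pos hp
  have hpC : (0:ℝ) < p * C := mul_pos hp0 hC
  have hpCinv : (0:ℝ) < (p * C)⁻¹ := inv_pos.mpr hpC
  obtain ⟨hT0, hTmul, hTcont⟩ := hT
  -- reduce to the case ω < 0
  suffices key : ∀ ω : ℝ, -(p * C)⁻¹ < ω → ω < 0 →
      ∃ M : ℝ, ∀ t : ℝ, 0 ≤ t → ‖T t‖ ≤ M * Real.exp (ω * t) by
    intro ω hω
    rcases lt_or_ge ω 0 with hneg | hpos
    · exact key ω hω hneg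
    · obtain ⟨M, hM⟩ := key (-(p * C)⁻¹ / 2) (by linarith) (by linarith)
      have hM0 : 0 ≤ M := by
        have h1 := hM 0 le_rfl
        simp only [mul_zero, Real.exp_zero, mul_one] at h1
        exact le_trans (norm_nonneg _) h1
      refine ⟨M, fun t ht => (hM t ht).trans ?_⟩
      apply mul_le_mul_of_nonneg_left _ hM0
      apply Real.exp_le_exp.mpr
      nlinarith
  intro ω hω hωneg
  -- uniform bound on [0,1] by Banach–Steinhaus
  have hub : ∀ x : X, ∃ B : ℝ, ∀ i : Set.Icc (0:ℝ) 1, ‖T (i : ℝ) x‖ ≤ B := by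
    intro x
    obtain ⟨B, hB⟩ := (isCompact_Icc (a := (0:ℝ)) (b := 1)).exists_bound_of_continuousOn
      ((hTcont x).mono (fun s hs => hs.1))
    exact ⟨B, fun i => hB i i.2⟩
  obtain ⟨M₀, hM₀⟩ := banach_steinhaus hub
  set M₁ : ℝ := max M₀ 1 with hM₁def
  have hM₁ : ∀ s ∈ Set.Icc (0:ℝ) 1, ‖T s‖ ≤ M₁ :=
    fun s hs => le_trans (hM₀ ⟨s, hs⟩) (le_max_left _ _)
  have hM₁1 : (1:ℝ) ≤ M₁ := le_max_right _ _
  have hM₁0 : (0:ℝ) ≤ M₁ := by linarith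
  -- parameters
  set ε : ℝ := -(p * ω) with hεdef
  have hε0 : 0 < ε := by nlinarith
  have hCε : C * ε < 1 := by
    have : -(p * C)⁻¹ * (p * C) < ω * (p * C) := by
      exact mul_lt_mul_of_pos_right hω hpC
    rw [neg_mul, inv_mul_cancel₀ hpC.ne'] at this
    nlinarith
  set e : ℝ := 1 / ε - C with hedef
  have he0 : 0 < e := by
    rw [hedef]
    rw [sub_pos, lt_div_iff₀ hε0]
    linarith [hCε]
  have heC : e + C = 1 / ε := by rw [hedef]; ring
  have hκval : C / (e + C) = C * ε := by
    rw [heC]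
    field_simp
  have hεe : ε * e = 1 - C * ε := by
    rw [hedef]
    field_simp
  have hκexp : C * ε ≤ Real.exp (-(ε * e)) := by
    rw [hεe]
    have := Real.add_one_le_exp (C * ε - 1)
    have heq : -(1 - C * ε) = C * ε - 1 := by ring
    rw [heq]
    linarith
  have hT0G : ∀ x : X, dpG T p x 0 ≤ ENNReal.ofReal (C * ‖x‖ ^ p) := by
    intro x
    have := dpG_shift T ⟨hT0, hTmul, hTcont⟩ p C h x (le_refl (0:ℝ))
    rwa [hT0] at this
  -- decay of G
  have hGdecay : ∀ (x : X) (t : ℝ), 1 ≤ t →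
      dpG T p x (t - 1) ≤ ENNReal.ofReal
        (Real.exp (ε * (1 + e)) * Real.exp (-(ε * t)) * (C * ‖x‖ ^ p)) := by
    intro x t ht
    set n : ℕ := ⌊(t - 1) / e⌋₊ with hn
    have ht1 : (0:ℝ) ≤ t - 1 := by linarith
    have hfl : ((n:ℝ)) ≤ (t - 1) / e := Nat.floor_le (div_nonneg ht1 he0.le)
    have hnh : (n:ℝ) * e ≤ t - 1 := (le_div_iff₀ he0).mp hfl
    have hnh2 : t - 1 ≤ (n:ℝ) * e + e := by
      have h2 := Nat.lt_floor_add_one ((t - 1) / e)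
      rw [div_lt_iff₀ he0] at h2
      rw [← hn] at h2
      nlinarith
    calc dpG T p x (t - 1) ≤ dpG T p x ((n:ℝ) * e) := dpG_mono T p x hnh
      _ ≤ ENNReal.ofReal (C / (e + C)) ^ n * dpG T p x 0 :=
          dpG_iter T ⟨hT0, hTmul, hTcont⟩ p C hC h x he0 n
      _ ≤ ENNReal.ofReal (Real.exp (-(ε * e))) ^ n * ENNReal.ofReal (C * ‖x‖ ^ p) := by
          refine mul_le_mul' (pow_le_pow_left' (ENNReal.ofReal_le_ofReal ?_) n) (hT0G x)
          rw [hκval]; exact hκexp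
      _ = ENNReal.ofReal (Real.exp (-(ε * e)) ^ n * (C * ‖x‖ ^ p)) := by
          rw [← ENNReal.ofReal_pow (Real.exp_pos _).le, ← ENNReal.ofReal_mul (by positivity)]
      _ ≤ _ := by
          apply ENNReal.ofReal_le_ofReal
          have hexp : Real.exp (-(ε * e)) ^ n = Real.exp (-(ε * ((n:ℝ) * e))) := by
            rw [← Real.exp_nat_mul]; ring_nf
          rw [hexp]
          have hle : Real.exp (-(ε * ((n:ℝ) * e)))
              ≤ Real.exp (ε * (1 + e)) * Real.exp (-(ε * t)) := by
            rw [← Real.exp_add]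
            apply Real.exp_le_exp.mpr
            nlinarith
          exact mul_le_mul_of_nonneg_right hle (by positivity)
  -- final constant for t ≥ 1
  set K : ℝ := M₁ * (Real.exp (ε * (1 + e)) * C) ^ p⁻¹ with hKdef
  have hK0 : 0 ≤ K := by positivity
  have hfinal1 : ∀ (x : X) (t : ℝ), 1 ≤ t → ‖T t x‖ ≤ K * Real.exp (ω * t) * ‖x‖ := by
    intro x t ht
    have h1 := (dp_pointwise T ⟨hT0, hTmul, hTcont⟩ p hp hM₁ hM₁0 x ht).trans
      (mul_le_mul' le_rfl (hGdecay x t ht))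
    rw [← ENNReal.ofReal_mul (by positivity)] at h1
    have h2 : ‖T t x‖ ^ p
        ≤ M₁ ^ p * (Real.exp (ε * (1 + e)) * Real.exp (-(ε * t)) * (C * ‖x‖ ^ p)) :=
      (ENNReal.ofReal_le_ofReal_iff (by positivity)).mp h1
    have h3 : M₁ ^ p * (Real.exp (ε * (1 + e)) * Real.exp (-(ε * t)) * (C * ‖x‖ ^ p))
        = (K * Real.exp (ω * t) * ‖x‖) ^ p := by
      rw [hKdef]
      rw [Real.mul_rpow (by positivity) (norm_nonneg x),
        Real.mul_rpow (by positivity) (Real.exp_pos _).le,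
        Real.mul_rpow hM₁0 (by positivity),
        Real.rpow_inv_rpow (by positivity) hp0.ne',
        ← Real.exp_mul]
      have hωtp : ω * t * p = -(ε * t) := by rw [hεdef]; ring
      rw [hωtp]
      ring
    rw [h3] at h2
    have h4 := Real.rpow_le_rpow (by positivity) h2 (inv_nonneg.mpr hp0.le)
    rwa [Real.rpow_rpow_inv (norm_nonneg _) hp0.ne',
      Real.rpow_rpow_inv (by positivity) hp0.ne'] at h4
  -- bound for t ≤ 1
  have hfinal2 : ∀ (x : X) (t : ℝ), 0 ≤ t → t ≤ 1 →
      ‖T t x‖ ≤ M₁ * Real.exp (-ω) * Real.exp (ω * t) * ‖x‖ := by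
    intro x t ht0 ht1
    have hb : ‖T t x‖ ≤ M₁ * ‖x‖ :=
      le_trans (ContinuousLinearMap.le_opNorm _ _)
        (mul_le_mul_of_nonneg_right (hM₁ t ⟨ht0, ht1⟩) (norm_nonneg _))
    have hexp1 : (1:ℝ) ≤ Real.exp (-ω) * Real.exp (ω * t) := by
      rw [← Real.exp_add]
      rw [show -ω + ω * t = ω * (t - 1) by ring]
      apply Real.one_le_exp
      nlinarith
    nlinarith [norm_nonneg x, norm_nonneg (T t x), mul_le_mul_of_nonneg_right hexp1
      (mul_nonneg hM₁0 (norm_nonneg x))]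
  refine ⟨max (M₁ * Real.exp (-ω)) K, fun t ht => ?_⟩
  have hMnn : 0 ≤ max (M₁ * Real.exp (-ω)) K := le_trans (by positivity) (le_max_left _ _)
  apply ContinuousLinearMap.opNorm_le_bound _ (by positivity)
  intro x
  rcases le_or_gt t 1 with ht1 | ht1
  · calc ‖T t x‖ ≤ M₁ * Real.exp (-ω) * Real.exp (ω * t) * ‖x‖ := hfinal2 x t ht ht1
      _ ≤ max (M₁ * Real.exp (-ω)) K * Real.exp (ω * t) * ‖x‖ := by
          exact mul_le_mul_of_nonneg_right (mul_le_mul_of_nonneg_right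
            (le_max_left (M₁ * Real.exp (-ω)) K) (Real.exp_pos _).le) (norm_nonneg x)
  · calc ‖T t x‖ ≤ K * Real.exp (ω * t) * ‖x‖ := hfinal1 x t ht1.le
      _ ≤ max (M₁ * Real.exp (-ω)) K * Real.exp (ω * t) * ‖x‖ := by
          exact mul_le_mul_of_nonneg_right (mul_le_mul_of_nonneg_right
            (le_max_right (M₁ * Real.exp (-ω)) K) (Real.exp_pos _).le) (norm_nonneg x)
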